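/- The function Ψ(x) = √(1 + x⁻² · ln((2x−1)/(2(x−1)))) − 1 is strictly decreasing on (1, +∞), tends to +∞ as x ↓ 1, and tends to 0 as x → +∞. Consequently, Ψ is a continuous strictly decreasing bijection from (1, +∞) onto (0, +∞), so for every m > 0 there is a unique p* ∈ (1, +∞) with Ψ(p*) = m. -/

import Mathlib

open Filter Set Real Topology

/-- `Ψ(x) = √(1 + x⁻² · ln((2x−1)/(2(x−1)))) − 1`. -/
noncomputable def Psi (x : ℝ) : ℝ :=
  Real.sqrt (1 + (1 / x ^ 2) * Real.log ((2 * x - 1) / (2 * (x - 1)))) - 1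

lemma ratio_gt_one {x : ℝ} (hx : 1 < x) : 1 < (2 * x - 1) / (2 * (x - 1)) := by
  rw [lt_div_iff₀ (by linarith)]; linarith

lemma g_pos {x : ℝ} (hx : 1 < x) :
    0 < (1 / x ^ 2) * Real.log ((2 * x - 1) / (2 * (x - 1))) := by
  have h1 : 0 < Real.log ((2 * x - 1) / (2 * (x - 1))) := Real.log_pos (ratio_gt_one hx)
  have h2 : (0:ℝ) < 1 / x ^ 2 := by positivity
  exact mul_pos h2 h1

lemma g_anti : StrictAntiOn
    (fun x : ℝ => (1 / x ^ 2) * Real.log ((2 * x - 1) / (2 * (x - 1)))) (Set.Ioi 1) := by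
  intro x hx y hy hxy
  simp only [Set.mem_Ioi] at hx hy
  have h1 : (1:ℝ) / y ^ 2 < 1 / x ^ 2 := by
    apply div_lt_div_of_pos_left one_pos (by positivity)
    nlinarith
  have h2 : Real.log ((2 * y - 1) / (2 * (y - 1))) < Real.log ((2 * x - 1) / (2 * (x - 1))) := by
    apply Real.log_lt_log (by rw [lt_div_iff₀ (by linarith)]; linarith)
    rw [div_lt_div_iff₀ (by linarith) (by linarith)]
    nlinarith
  have h3 : 0 ≤ Real.log ((2 * y - 1) / (2 * (y - 1))) :=
    (Real.log_pos (ratio_gt_one hy)).le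
  have h4 : (0:ℝ) ≤ 1 / y ^ 2 := by positivity
  exact mul_lt_mul'' h1 h2 h4 h3 |>.trans_le le_rfl |> fun h => by
    simpa using h

lemma psi_anti : StrictAntiOn Psi (Set.Ioi 1) := by
  intro x hx y hy hxy
  unfold Psi
  have hgy := g_pos (Set.mem_Ioi.mp hy)
  have h := g_anti hx hy hxy
  have : Real.sqrt (1 + (1 / y ^ 2) * Real.log ((2 * y - 1) / (2 * (y - 1)))) <
      Real.sqrt (1 + (1 / x ^ 2) * Real.log ((2 * x - 1) / (2 * (x - 1)))) :=
    Real.sqrt_lt_sqrt (by positivity) (by simpa using add_lt_add_left h 1)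
  linarith

lemma psi_cont : ContinuousOn Psi (Set.Ioi 1) := by
  intro x hx
  have hx1 : (1:ℝ) < x := hx
  apply ContinuousAt.continuousWithinAt
  unfold Psi
  have hd : (2:ℝ) * (x - 1) ≠ 0 := ne_of_gt (by linarith)
  have hr : (2 * x - 1) / (2 * (x - 1)) ≠ 0 := ne_of_gt (lt_trans one_pos (ratio_gt_one hx1))
  have hx2 : x ^ 2 ≠ 0 := by positivity
  have c1 : ContinuousAt (fun x : ℝ => (2 * x - 1) / (2 * (x - 1))) x :=
    ContinuousAt.div (by fun_prop) (by fun_prop) hd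
  have c2 : ContinuousAt (fun x : ℝ => Real.log ((2 * x - 1) / (2 * (x - 1)))) x := c1.log hr
  have c3 : ContinuousAt (fun x : ℝ => 1 / x ^ 2) x := ContinuousAt.div (by fun_prop) (by fun_prop) hx2
  have c4 : ContinuousAt (fun x : ℝ =>
      1 + (1 / x ^ 2) * Real.log ((2 * x - 1) / (2 * (x - 1)))) x := (c3.mul c2).const_add 1
  exact ((Real.continuous_sqrt.continuousAt.comp c4).sub continuousAt_const)

lemma psi_pos {x : ℝ} (hx : 1 < x) : 0 < Psi x := by
  unfold Psi
  have h := g_pos hx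
  have : 1 < Real.sqrt (1 + (1 / x ^ 2) * Real.log ((2 * x - 1) / (2 * (x - 1)))) := by
    rw [Real.lt_sqrt (by norm_num)]
    nlinarith
  linarith

lemma sqrt_tendsto_atTop : Tendsto Real.sqrt atTop atTop := by
  apply tendsto_atTop_atTop_of_monotone (fun a b h => Real.sqrt_le_sqrt h)
  intro b
  exact ⟨(max b 0) ^ 2, by rw [Real.sqrt_sq (le_max_right b 0)]; exact le_max_left b 0⟩

lemma psi_tendsto_one : Tendsto Psi (nhdsWithin 1 (Set.Ioi 1)) atTop := by
  have hden : Tendsto (fun x : ℝ => 2 * (x - 1)) (nhdsWithin 1 (Set.Ioi 1))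
      (nhdsWithin 0 (Set.Ioi 0)) := by
    apply tendsto_nhdsWithin_of_tendsto_nhds_of_eventually_within
    · have : Tendsto (fun x : ℝ => 2 * (x - 1)) (nhds 1) (nhds (2 * (1 - 1))) :=
        Continuous.tendsto (by continuity) 1
      norm_num at this
      exact this.mono_left nhdsWithin_le_nhds
    · filter_upwards [self_mem_nhdsWithin] with x hx
      have : (1:ℝ) < x := hx
      simp only [Set.mem_Ioi]; linarith
  have hinv : Tendsto (fun x : ℝ => (2 * (x - 1))⁻¹) (nhdsWithin 1 (Set.Ioi 1)) atTop :=
    tendsto_inv_nhdsGT_zero.comp hden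
  have hnum : Tendsto (fun x : ℝ => 2 * x - 1) (nhdsWithin 1 (Set.Ioi 1)) (nhds 1) := by
    have : Tendsto (fun x : ℝ => 2 * x - 1) (nhds 1) (nhds (2 * 1 - 1)) :=
      Continuous.tendsto (by continuity) 1
    norm_num at this
    exact this.mono_left nhdsWithin_le_nhds
  have hratio : Tendsto (fun x : ℝ => (2 * x - 1) / (2 * (x - 1)))
      (nhdsWithin 1 (Set.Ioi 1)) atTop := by
    simp only [div_eq_mul_inv]
    exact hnum.pos_mul_atTop one_pos hinv
  have hlog : Tendsto (fun x : ℝ => Real.log ((2 * x - 1) / (2 * (x - 1))))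
      (nhdsWithin 1 (Set.Ioi 1)) atTop := Real.tendsto_log_atTop.comp hratio
  have hcoef : Tendsto (fun x : ℝ => 1 / x ^ 2) (nhdsWithin 1 (Set.Ioi 1)) (nhds 1) := by
    have : Tendsto (fun x : ℝ => 1 / x ^ 2) (nhds 1) (nhds (1 / 1 ^ 2)) := by
      apply Tendsto.div tendsto_const_nhds (Continuous.tendsto (by continuity) 1) (by norm_num)
    norm_num [one_div] at this ⊢
    exact this.mono_left nhdsWithin_le_nhds
  have hmul : Tendsto (fun x : ℝ => (1 / x ^ 2) * Real.log ((2 * x - 1) / (2 * (x - 1))))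
      (nhdsWithin 1 (Set.Ioi 1)) atTop := hcoef.pos_mul_atTop one_pos hlog
  have hadd : Tendsto (fun x : ℝ => 1 + (1 / x ^ 2) * Real.log ((2 * x - 1) / (2 * (x - 1))))
      (nhdsWithin 1 (Set.Ioi 1)) atTop := tendsto_atTop_add_const_left _ 1 hmul
  have hsqrt : Tendsto (fun x : ℝ =>
      Real.sqrt (1 + (1 / x ^ 2) * Real.log ((2 * x - 1) / (2 * (x - 1)))))
      (nhdsWithin 1 (Set.Ioi 1)) atTop := sqrt_tendsto_atTop.comp hadd
  exact tendsto_atTop_add_const_right _ (-1) hsqrt |>.congr (fun x => by simp [Psi, sub_eq_add_neg])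

lemma psi_tendsto_top : Tendsto Psi atTop (nhds 0) := by
  have hinv : Tendsto (fun x : ℝ => 1 / x) atTop (nhds 0) := by
    simpa using tendsto_inv_atTop_zero
  have hratio : Tendsto (fun x : ℝ => (2 * x - 1) / (2 * (x - 1))) atTop (nhds 1) := by
    have h1 : Tendsto (fun x : ℝ => (2 - 1 / x) / (2 - 2 / x)) atTop (nhds 1) := by
      have hn : Tendsto (fun x : ℝ => 2 - 1 / x) atTop (nhds 2) := by
        simpa using tendsto_const_nhds.sub hinv
      have hd : Tendsto (fun x : ℝ => 2 - 2 / x) atTop (nhds 2) := by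
        have : Tendsto (fun x : ℝ => 2 / x) atTop (nhds 0) := by
          simpa [div_eq_mul_inv] using tendsto_inv_atTop_zero.const_mul (2:ℝ)
        simpa using tendsto_const_nhds.sub this
      have h2 : Tendsto (fun x : ℝ => (2 - 1 / x) / (2 - 2 / x)) atTop (nhds (2 / 2)) :=
        hn.div hd (by norm_num)
      simpa using h2
    apply h1.congr'
    filter_upwards [eventually_gt_atTop (1:ℝ)] with x hx
    have hx0 : x ≠ 0 := by positivity
    field_simp
  have hlog : Tendsto (fun x : ℝ => Real.log ((2 * x - 1) / (2 * (x - 1)))) atTop (nhds 0) := by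
    have := (Real.continuousAt_log (x := 1) one_ne_zero).tendsto.comp hratio
    simpa [Function.comp_def] using this
  have hcoef : Tendsto (fun x : ℝ => 1 / x ^ 2) atTop (nhds 0) := by
    have : Tendsto (fun x : ℝ => x ^ 2) atTop atTop := tendsto_pow_atTop (by norm_num)
    simpa [one_div, Function.comp_def] using tendsto_inv_atTop_zero.comp this
  have hmul : Tendsto (fun x : ℝ => (1 / x ^ 2) * Real.log ((2 * x - 1) / (2 * (x - 1))))
      atTop (nhds 0) := by simpa using hcoef.mul hlog
  have hadd : Tendsto (fun x : ℝ => 1 + (1 / x ^ 2) * Real.log ((2 * x - 1) / (2 * (x - 1))))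
      atTop (nhds 1) := by simpa using tendsto_const_nhds.add hmul
  have hsqrt : Tendsto (fun x : ℝ =>
      Real.sqrt (1 + (1 / x ^ 2) * Real.log ((2 * x - 1) / (2 * (x - 1)))))
      atTop (nhds 1) := by
    have := (Real.continuous_sqrt.tendsto 1).comp hadd
    simpa [Function.comp_def] using this
  have : Tendsto Psi atTop (nhds (1 - 1)) := hsqrt.sub tendsto_const_nhds
  simpa using this

lemma psi_surj {m : ℝ} (hm : 0 < m) : ∃ x ∈ Set.Ioi (1:ℝ), Psi x = m := by
  -- pick a near 1 with Psi a > m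
  have h1 : ∀ᶠ x in nhdsWithin 1 (Set.Ioi 1), m < Psi x :=
    psi_tendsto_one.eventually_gt_atTop m
  obtain ⟨a, ha, ham⟩ := (h1.and self_mem_nhdsWithin).exists
  -- pick b large with Psi b < m
  have h2 : ∀ᶠ x in atTop, Psi x < m :=
    psi_tendsto_top.eventually (eventually_lt_nhds hm)
  obtain ⟨N, hN⟩ := h2.exists_forall_of_atTop
  set b := max N (a + 1) with hb
  have hab : a < b := lt_of_lt_of_le (by linarith) (le_max_right _ _)
  have ha1 : (1:ℝ) < a := ham
  have hb1 : (1:ℝ) < b := lt_trans ha1 hab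
  have hbm : Psi b < m := hN b (le_max_left _ _)
  have hsub : Set.Icc a b ⊆ Set.Ioi 1 := fun y hy => lt_of_lt_of_le ha1 hy.1
  have hcont : ContinuousOn Psi (Set.Icc a b) := psi_cont.mono hsub
  have := intermediate_value_Icc' hab.le hcont
  have hmem : m ∈ Set.Icc (Psi b) (Psi a) := ⟨hbm.le, ha.le⟩
  obtain ⟨x, hx, hxm⟩ := this hmem
  exact ⟨x, hsub hx, hxm⟩


/-- `Ψ` is strictly decreasing on `(1,∞)`, tends to `+∞` as `x ↓ 1` and to `0` as
`x → +∞`; it is a continuous strictly decreasing bijection from `(1,∞)` onto `(0,∞)`,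
so every `m > 0` has a unique preimage `p* ∈ (1,∞)`. -/
theorem Psi_strictAnti_tendsto_bijective :
    StrictAntiOn Psi (Set.Ioi 1) ∧
    ContinuousOn Psi (Set.Ioi 1) ∧
    Tendsto Psi (nhdsWithin 1 (Set.Ioi 1)) atTop ∧
    Tendsto Psi atTop (nhds 0) ∧
    Set.BijOn Psi (Set.Ioi 1) (Set.Ioi 0) ∧
    (∀ m : ℝ, 0 < m → ∃! x : ℝ, x ∈ Set.Ioi (1 : ℝ) ∧ Psi x = m) := by
  have hbij : Set.BijOn Psi (Set.Ioi 1) (Set.Ioi 0) := by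
    refine ⟨fun x hx => psi_pos hx, psi_anti.injOn, ?_⟩
    intro m hm
    obtain ⟨x, hx, hxm⟩ := psi_surj hm
    exact ⟨x, hx, hxm⟩
  refine ⟨psi_anti, psi_cont, psi_tendsto_one, psi_tendsto_top, hbij, ?_⟩
  intro m hm
  obtain ⟨x, hx, hxm⟩ := psi_surj hm
  refine ⟨x, ⟨hx, hxm⟩, ?_⟩
  rintro y ⟨hy, hym⟩
  exact psi_anti.injOn hy hx (hym.trans hxm.symm)
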